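/- Let κ be an infinite cardinal and K the complete graph on κ⁺ many vertices. Then there exists an edge coloring of K with κ colors having no monochromatic cycles. -/

import Mathlib

open Cardinal in
private lemma aux_cycle {V : Type u} [LinearOrder V] {C : Type u}
    (f : ∀ v : V, {w // w < v} → C) (hf : ∀ v, Function.Injective (f v))
    (χ : Sym2 V → C) (hχ : ∀ a b (h : a < b), χ s(a, b) = f b ⟨a, h⟩)
    {m : V} (q : (⊤ : SimpleGraph V).Walk m m) (hq : q.IsCycle)
    (hsup : ∀ x ∈ q.support, x ≤ m) (c0 : C)
    (hmono : ∀ e ∈ q.edges, χ e = c0) : False := by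
  cases q with
  | nil => exact SimpleGraph.Walk.IsCycle.not_of_nil hq
  | @cons _ b _ h1 q' =>
    rw [SimpleGraph.Walk.cons_isCycle_iff] at hq
    obtain ⟨hpath, hnedge⟩ := hq
    have hbm : b ≠ m := ((SimpleGraph.top_adj _ _).mp h1).symm
    have hbmem : b ∈ (SimpleGraph.Walk.cons h1 q').support := by
      simp [SimpleGraph.Walk.support_cons]
    have hb : b < m := lt_of_le_of_ne (hsup b hbmem) hbm
    -- look at the last edge, via reverse
    have hnn : ¬ q'.reverse.Nil := SimpleGraph.Walk.not_nil_of_ne (Ne.symm hbm)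
    obtain ⟨c, h2, r, hr⟩ := SimpleGraph.Walk.not_nil_iff.mp hnn
    have hcm : c ≠ m := ((SimpleGraph.top_adj _ _).mp h2).symm
    have hcmem : c ∈ q'.support := by
      have : c ∈ q'.reverse.support := by
        rw [hr]; simp [SimpleGraph.Walk.support_cons]
      simpa using this
    have hc : c < m := lt_of_le_of_ne (hsup c (by simp [SimpleGraph.Walk.support_cons, hcmem])) hcm
    have hedge_mc : s(m, c) ∈ q'.edges := by
      have : s(m, c) ∈ q'.reverse.edges := by
        rw [hr]; simp [SimpleGraph.Walk.edges_cons]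
      simpa using this
    have h1c : χ s(m, b) = c0 := hmono _ (by simp [SimpleGraph.Walk.edges_cons])
    have h2c : χ s(m, c) = c0 := hmono _ (by simp [SimpleGraph.Walk.edges_cons, hedge_mc])
    have e1 : χ s(m, b) = f m ⟨b, hb⟩ := by rw [Sym2.eq_swap]; exact hχ b m hb
    have e2 : χ s(m, c) = f m ⟨c, hc⟩ := by rw [Sym2.eq_swap]; exact hχ c m hc
    have : (⟨b, hb⟩ : {w // w < m}) = ⟨c, hc⟩ := by
      apply hf m; rw [← e1, ← e2, h1c, h2c]
    have hbc : b = c := by simpa using this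
    exact hnedge (hbc ▸ hedge_mc)

open Cardinal in
theorem stmt6 {V : Type u} (κ : Cardinal.{u}) (hκ : ℵ₀ ≤ κ)
    (hV : #V = Order.succ κ) :
    ∃ χ : Sym2 V → κ.out,
      ∀ (v : V) (p : (⊤ : SimpleGraph V).Walk v v), p.IsCycle →
        ¬ ∃ c : κ.out, ∀ e ∈ p.edges, χ e = c := by
  classical
  -- an equiv with the canonical well-order of type (succ κ).ord
  have hVT : #V = #((Order.succ κ).ord.ToType) := by
    rw [Cardinal.mk_ord_toType, hV]
  obtain ⟨e⟩ := Cardinal.eq.mp hVT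
  letI : LinearOrder V := LinearOrder.lift' e e.injective
  have hlt : ∀ a b : V, a < b ↔ e a < e b := fun a b => Iff.rfl
  -- each initial segment has cardinality ≤ κ
  have hseg : ∀ v : V, #{w : V // w < v} ≤ #κ.out := by
    intro v
    rw [Cardinal.mk_out]
    have h1 : #{w : V // w < v} ≤ #(Set.Iio (e v)) := by
      apply Cardinal.mk_le_of_injective (f := fun w => ⟨e w.1, (hlt w.1 v).mp w.2⟩)
      intro a b hab
      exact Subtype.ext (e.injective (by simpa using congrArg Subtype.val hab))
    have h2 : #(Set.Iio (e v)) < Order.succ κ := Cardinal.mk_Iio_ord_toType (e v)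
    exact h1.trans (Order.lt_succ_iff.mp h2)
  have hne : Nonempty κ.out := by
    rw [← Cardinal.mk_ne_zero_iff, Cardinal.mk_out]
    exact fun h => by simp [h] at hκ; exact absurd hκ (by simpa using Cardinal.aleph0_ne_zero)
  obtain ⟨d0⟩ := hne
  -- injections from initial segments into κ.out
  have hf : ∀ v : V, ∃ f : {w : V // w < v} → κ.out, Function.Injective f := by
    intro v
    obtain ⟨f⟩ := Cardinal.le_def _ _ |>.mp (hseg v)
    exact ⟨f, f.injective⟩
  choose f hfinj using hf
  -- the coloring
  let g : V → V → κ.out := fun a b =>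
    if h : a < b then f b ⟨a, h⟩ else if h' : b < a then f a ⟨b, h'⟩ else d0
  have hgsymm : ∀ a b : V, g a b = g b a := by
    intro a b
    rcases lt_trichotomy a b with h | h | h
    · simp [g, h, not_lt_of_gt h]
    · simp [g, h]
    · simp [g, h, not_lt_of_gt h]
  let χ : Sym2 V → κ.out := Sym2.lift ⟨g, hgsymm⟩
  have hχ : ∀ a b (h : a < b), χ s(a, b) = f b ⟨a, h⟩ := by
    intro a b h
    simp only [χ, Sym2.lift_mk, g, dif_pos h]
  refine ⟨χ, ?_⟩
  rintro v p hp ⟨c0, hc0⟩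
  -- take the maximal vertex in the support
  have hsne : p.support.toFinset.Nonempty := by
    simp [List.toFinset_nonempty_iff, SimpleGraph.Walk.support_ne_nil]
  set m := p.support.toFinset.max' hsne with hm
  have hmmem : m ∈ p.support := by
    have := p.support.toFinset.max'_mem hsne
    simpa using this
  have hmax : ∀ x ∈ p.support, x ≤ m := by
    intro x hx
    exact p.support.toFinset.le_max' x (by simpa using hx)
  -- rotate the cycle to start at m
  have hq : (p.rotate m hmmem).IsCycle := hp.rotate hmmem
  have hqsup : ∀ x ∈ (p.rotate m hmmem).support, x ≤ m := by
    intro x hx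
    rcases List.mem_cons.mp ((p.rotate m hmmem).support_eq_cons ▸ hx) with h | h
    · exact h ▸ le_refl m
    · exact hmax x (List.mem_of_mem_tail
        ((SimpleGraph.Walk.support_rotate p m hmmem).mem_iff.mp h))
  have hqmono : ∀ e ∈ (p.rotate m hmmem).edges, χ e = c0 := by
    intro e he
    exact hc0 e ((p.rotate_edges m hmmem).mem_iff.mp he)
  exact aux_cycle f hfinj χ hχ (p.rotate m hmmem) hq hqsup c0 hqmono
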